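/- For a finite graph, the block structure (obtained by contracting each block to a fat vertex attached at its cut vertices) contains no cycle: the incidence structure of blocks and cut vertices forms a forest (the block-cut tree is acyclic). -/

import Mathlib

open scoped Classical

/-- A finite multigraph: edges with a source and target vertex. -/
structure Multigraph (V E : Type) where
  src : E → V
  tgt : E → V

/-- A dart is an oriented edge: an edge together with a direction. -/
abbrev Dart (E : Type) := E × Bool

namespace Multigraph

variable {V E : Type}

/-- Source of a dart. -/
def dsrc (G : Multigraph V E) (d : Dart E) : V := if d.2 then G.src d.1 else G.tgt d.1

/-- Target of a dart. -/
def dtgt (G : Multigraph V E) (d : Dart E) : V := if d.2 then G.tgt d.1 else G.src d.1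

/-- A closed walk: a nonempty cyclically consistent list of darts. -/
def IsClosedWalk (G : Multigraph V E) (w : List (Dart E)) : Prop :=
  w ≠ [] ∧ List.Chain' (fun d d' => G.dtgt d = G.dsrc d') w ∧
    ∀ dl ∈ w.getLast?, ∀ dh ∈ w.head?, G.dtgt dl = G.dsrc dh

/-- A cycle: a closed walk repeating no edges and no vertices. -/
def IsCycle (G : Multigraph V E) (w : List (Dart E)) : Prop :=
  G.IsClosedWalk w ∧ (w.map Prod.fst).Nodup ∧ (w.map G.dsrc).Nodup

/-- A walk from `u` to `v`. -/
def IsWalkFrom (G : Multigraph V E) (w : List (Dart E)) (u v : V) : Prop :=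
  List.Chain' (fun d d' => G.dtgt d = G.dsrc d') w ∧
    (w = [] → u = v) ∧ (∀ d ∈ w.head?, G.dsrc d = u) ∧ (∀ d ∈ w.getLast?, G.dtgt d = v)

/-- Connectivity: any two vertices are joined by a walk. -/
def Conn (G : Multigraph V E) : Prop := ∀ u v : V, ∃ w, G.IsWalkFrom w u v

/-- The 1-chain (with `ℤ` coefficients) of a single dart. -/
noncomputable def dartChain (d : Dart E) : E → ℤ :=
  fun e => if d.1 = e then (if d.2 then 1 else -1) else 0

/-- The 1-chain of a walk. -/
noncomputable def chain (w : List (Dart E)) : E → ℤ := (w.map dartChain).sum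

/-- The length of a walk given edge lengths `l`. -/
def walkLength (l : E → ℝ) (w : List (Dart E)) : ℝ := (w.map fun d => l d.1).sum

/-- The set of (unoriented) edges used by a walk. -/
def edges (w : List (Dart E)) : Set E := {e | ∃ b, (e, b) ∈ w}

/-- The set of vertices visited by a closed walk. -/
def vertsOf (G : Multigraph V E) (w : List (Dart E)) : Set V := {v | ∃ d ∈ w, G.dsrc d = v}

/-- Restriction of a graph to a set of edges. -/
def restrict (G : Multigraph V E) (S : Set E) : Multigraph V S where
  src e := G.src e.1
  tgt e := G.tgt e.1

/-- Deletion of a set of vertices (and all incident edges). -/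
def deleteVerts (G : Multigraph V E) (X : Set V) :
    Multigraph {v // v ∉ X} {e // G.src e ∉ X ∧ G.tgt e ∉ X} where
  src e := ⟨G.src e.1, e.2.1⟩
  tgt e := ⟨G.tgt e.1, e.2.2⟩

/-- Degree of a vertex (loops count twice). -/
noncomputable def degree (G : Multigraph V E) [Fintype E] (v : V) : ℕ :=
  (Finset.univ.filter fun e => G.src e = v).card +
  (Finset.univ.filter fun e => G.tgt e = v).card

/-- The boundary of a 1-chain. -/
noncomputable def boundary (G : Multigraph V E) [Fintype E] (x : E → ℤ) : V → ℤ :=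
  fun v => ∑ e, x e * ((if G.tgt e = v then 1 else 0) - (if G.src e = v then 1 else 0))

/-- The first homology `H₁(G,ℤ)`, as the kernel of the boundary map. -/
def H1 (G : Multigraph V E) [Fintype E] : Submodule ℤ (E → ℤ) where
  carrier := {x | G.boundary x = 0}
  add_mem' := by
    intro a b ha hb
    have h : G.boundary (a + b) = G.boundary a + G.boundary b := by
      funext v
      simp [boundary, add_mul, Finset.sum_add_distrib]
    simp only [Set.mem_setOf_eq] at *
    rw [h, ha, hb, add_zero]
  zero_mem' := by
    simp only [Set.mem_setOf_eq]
    funext v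
    simp [boundary]
  smul_mem' := by
    intro c x hx
    have h : G.boundary (c • x) = c • G.boundary x := by
      funext v
      simp [boundary, Finset.mul_sum, mul_assoc]
    simp only [Set.mem_setOf_eq] at *
    rw [h, hx, smul_zero]

/-- The path metric induced by edge lengths. -/
noncomputable def gdist (G : Multigraph V E) (l : E → ℝ) (u v : V) : ℝ :=
  sInf {x | ∃ w, G.IsWalkFrom w u v ∧ walkLength l w = x}

/-- Minimal length of a closed walk in a given homology class. -/
noncomputable def minLen (G : Multigraph V E) (l : E → ℝ) (h : E → ℤ) : ℝ :=
  sInf {x | ∃ w, G.IsClosedWalk w ∧ chain w = h ∧ walkLength l w = x}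

end Multigraph

open Multigraph

/-- The relation generating block equivalence: two cycles are related if they share an edge. -/
def CycleRel {V E : Type} (G : Multigraph V E) :
    {w : List (Dart E) // G.IsCycle w} → {w : List (Dart E) // G.IsCycle w} → Prop :=
  fun a b => ∃ e, e ∈ Multigraph.edges a.1 ∧ e ∈ Multigraph.edges b.1

/-- Blocks: equivalence classes of cycles under the relation generated by edge-sharing. -/
def Block {V E : Type} (G : Multigraph V E) := Quot (CycleRel G)

/-- The set of vertices lying on a block. -/
def vertsOfBlock {V E : Type} (G : Multigraph V E) (B : Block G) : Set V :=
  {v | ∃ c : {w : List (Dart E) // G.IsCycle w},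
    Quot.mk (CycleRel G) c = B ∧ v ∈ G.vertsOf c.1}

/-- A cut vertex: a vertex whose deletion disconnects the graph. -/
def IsCutVertex {V E : Type} (G : Multigraph V E) (v : V) : Prop :=
  ¬ (G.deleteVerts {v}).Conn

/-- The block-cut tree: the bipartite incidence graph of blocks and cut vertices, with a
block adjacent to a cut vertex iff the cut vertex lies on the block. -/
def blockCutGraph {V E : Type} (G : Multigraph V E) :
    SimpleGraph (Block G ⊕ {v : V // IsCutVertex G v}) :=
  SimpleGraph.fromRel (fun x y =>
    ∃ (B : Block G) (v : {v : V // IsCutVertex G v}),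
      x = Sum.inl B ∧ y = Sum.inr v ∧ v.1 ∈ vertsOfBlock G B)

namespace Multigraph
variable {V E : Type} {G : Multigraph V E}

/-- Flip the orientation of a dart. -/
def flipDart (d : Dart E) : Dart E := (d.1, !d.2)

lemma dsrc_flip (d : Dart E) : G.dsrc (flipDart d) = G.dtgt d := by
  rcases d with ⟨e, b⟩; cases b <;> simp [flipDart, dsrc, dtgt]

lemma dtgt_flip (d : Dart E) : G.dtgt (flipDart d) = G.dsrc d := by
  rcases d with ⟨e, b⟩; cases b <;> simp [flipDart, dsrc, dtgt]

lemma isWalkFrom_nil (u : V) : G.IsWalkFrom [] u u :=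
  ⟨List.isChain_nil, fun _ => rfl, by simp, by simp⟩

lemma IsWalkFrom.cons {d : Dart E} {t : List (Dart E)} {u v : V}
    (hd : G.dsrc d = u) (h : G.IsWalkFrom t (G.dtgt d) v) :
    G.IsWalkFrom (d :: t) u v := by
  obtain ⟨hc, hn, hh, hl⟩ := h
  refine ⟨?_, by simp, ?_, ?_⟩
  · change List.IsChain _ (d :: t); rw [List.isChain_cons]
    exact ⟨fun y hy => (hh y hy).symm, hc⟩
  · intro x hx; simp at hx; subst hx; exact hd
  · intro x hx
    rcases t with _ | ⟨a, t⟩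
    · simp at hx; subst hx
      exact (hn rfl) ▸ rfl
    · rw [List.getLast?_cons_cons] at hx
      exact hl x hx

lemma IsWalkFrom.tail' {d : Dart E} {t : List (Dart E)} {u v : V}
    (h : G.IsWalkFrom (d :: t) u v) :
    G.dsrc d = u ∧ G.IsWalkFrom t (G.dtgt d) v := by
  obtain ⟨hc, hn, hh, hl⟩ := h
  change List.IsChain _ (d :: t) at hc; rw [List.isChain_cons] at hc
  refine ⟨hh d rfl, hc.2, ?_, ?_, ?_⟩
  · intro ht; subst ht
    exact hl d rfl
  · intro x hx; exact (hc.1 x hx).symm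
  · intro x hx
    rcases t with _ | ⟨a, t⟩
    · simp at hx
    · exact hl x (by rw [List.getLast?_cons_cons]; exact hx)

lemma IsWalkFrom.append {w₁ w₂ : List (Dart E)} {u x v : V}
    (h₁ : G.IsWalkFrom w₁ u x) (h₂ : G.IsWalkFrom w₂ x v) :
    G.IsWalkFrom (w₁ ++ w₂) u v := by
  induction w₁ generalizing u with
  | nil => simpa [(h₁.2.1 rfl)] using h₂
  | cons d t ih =>
    obtain ⟨hd, ht⟩ := h₁.tail'
    exact IsWalkFrom.cons hd (ih ht)

lemma IsWalkFrom.append_iff {w₁ w₂ : List (Dart E)} {u v : V}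
    (h : G.IsWalkFrom (w₁ ++ w₂) u v) :
    ∃ m, G.IsWalkFrom w₁ u m ∧ G.IsWalkFrom w₂ m v := by
  induction w₁ generalizing u with
  | nil => exact ⟨u, isWalkFrom_nil u, by simpa using h⟩
  | cons d t ih =>
    obtain ⟨hd, ht⟩ := h.tail'
    obtain ⟨m, hm1, hm2⟩ := ih ht
    exact ⟨m, IsWalkFrom.cons hd hm1, hm2⟩

lemma isClosedWalk_iff {w : List (Dart E)} {u : V} (hne : w ≠ [])
    (hu : ∀ d ∈ w.head?, G.dsrc d = u) :
    (G.IsClosedWalk w ↔ G.IsWalkFrom w u u) := by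
  constructor
  · rintro ⟨-, hc, hwrap⟩
    refine ⟨hc, fun h => absurd h hne, hu, ?_⟩
    intro dl hdl
    rcases w with _ | ⟨d, t⟩
    · simp at hdl
    · have := hwrap dl hdl d rfl
      rw [this]; exact hu d rfl
  · rintro ⟨hc, -, hh, hl⟩
    refine ⟨hne, hc, ?_⟩
    intro dl hdl dh hdh
    rw [hl dl hdl, hh dh hdh]

lemma IsWalkFrom.isClosedWalk {w : List (Dart E)} {u : V} (hne : w ≠ [])
    (h : G.IsWalkFrom w u u) : G.IsClosedWalk w :=
  (isClosedWalk_iff hne h.2.2.1).mpr h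

end Multigraph
namespace Multigraph
variable {V E : Type} {G : Multigraph V E}

lemma boundary_zero [Fintype E] : G.boundary (0 : E → ℤ) = 0 := by
  funext v; simp [boundary]

lemma boundary_add [Fintype E] (x y : E → ℤ) :
    G.boundary (x + y) = G.boundary x + G.boundary y := by
  funext v; simp [boundary, add_mul, Finset.sum_add_distrib]

lemma chain_nil : chain ([] : List (Dart E)) = 0 := by simp [chain]

lemma chain_cons (d : Dart E) (w : List (Dart E)) :
    chain (d :: w) = dartChain d + chain w := by simp [chain]

lemma chain_append (w₁ w₂ : List (Dart E)) :
    chain (w₁ ++ w₂) = chain w₁ + chain w₂ := by simp [chain]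

lemma boundary_dartChain [Fintype E] (d : Dart E) :
    G.boundary (dartChain d) = fun v =>
      (if G.dtgt d = v then 1 else 0) - (if G.dsrc d = v then 1 else 0) := by
  funext v
  rcases d with ⟨e, b⟩
  simp only [boundary, dartChain]
  rw [Finset.sum_eq_single e]
  · cases b <;> simp [dsrc, dtgt] <;> ring
  · intro e' _ hne
    simp [Ne.symm hne]
  · intro h; simp at h

lemma boundary_chain_walk [Fintype E] {w : List (Dart E)} {u v : V}
    (h : G.IsWalkFrom w u v) :
    G.boundary (chain w) = fun x =>
      (if v = x then 1 else 0) - (if u = x then 1 else 0) := by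
  induction w generalizing u with
  | nil =>
    have := h.2.1 rfl; subst this
    rw [chain_nil, boundary_zero]; funext x; simp
  | cons d t ih =>
    obtain ⟨hd, ht⟩ := h.tail'
    rw [chain_cons, boundary_add, boundary_dartChain, ih ht]
    funext x
    rw [← hd]
    simp only [Pi.add_apply]
    ring

lemma IsClosedWalk.boundary_chain [Fintype E] {w : List (Dart E)}
    (h : G.IsClosedWalk w) : G.boundary (chain w) = 0 := by
  rcases w with _ | ⟨d, t⟩
  · exact absurd rfl h.1
  · have hw : G.IsWalkFrom (d :: t) (G.dsrc d) (G.dsrc d) :=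
      (isClosedWalk_iff h.1 (by simp)).mp h
    rw [boundary_chain_walk hw]; funext x; simp

/-- The chain of a walk restricted to darts whose edge lies in `S`. -/
noncomputable def chainRes (S : Set E) (w : List (Dart E)) : E → ℤ :=
  (w.map fun d => if d.1 ∈ S then dartChain d else 0).sum

lemma chainRes_nil (S : Set E) : chainRes S ([] : List (Dart E)) = 0 := by simp [chainRes]

lemma chainRes_cons (S : Set E) (d : Dart E) (w : List (Dart E)) :
    chainRes S (d :: w) = (if d.1 ∈ S then dartChain d else 0) + chainRes S w := by
  simp [chainRes]

lemma chainRes_append (S : Set E) (w₁ w₂ : List (Dart E)) :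
    chainRes S (w₁ ++ w₂) = chainRes S w₁ + chainRes S w₂ := by
  simp [chainRes]

lemma chainRes_eq_chain {S : Set E} {w : List (Dart E)} (h : ∀ d ∈ w, d.1 ∈ S) :
    chainRes S w = chain w := by
  induction w with
  | nil => simp [chainRes, chain]
  | cons d t ih =>
    rw [chainRes_cons, chain_cons, if_pos (h d (by simp)),
      ih fun x hx => h x (by simp [hx])]

lemma chainRes_eq_zero {S : Set E} {w : List (Dart E)} (h : ∀ d ∈ w, d.1 ∉ S) :
    chainRes S w = 0 := by
  induction w with
  | nil => simp [chainRes]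
  | cons d t ih =>
    rw [chainRes_cons, if_neg (h d (by simp)),
      ih fun x hx => h x (by simp [hx])]
    simp

lemma dartChain_add_flip (e : E) (b : Bool) :
    dartChain (e, b) + dartChain (e, !b) = 0 := by
  funext e'
  cases b <;> simp [dartChain] <;> split_ifs <;> ring

lemma dtgt_dsrc_not (e : E) (b : Bool) : G.dtgt (e, b) = G.dsrc (e, !b) := by
  cases b <;> simp [dsrc, dtgt]

end Multigraph
namespace Multigraph
variable {V E : Type} {G : Multigraph V E}

lemma exists_dup_split {α β : Type*} (f : α → β) :
    ∀ (l : List α), ¬ (l.map f).Nodup →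
      ∃ s m t a b, l = s ++ a :: (m ++ b :: t) ∧ f a = f b := by
  intro l
  induction l with
  | nil => intro h; simp at h
  | cons x xs ih =>
    intro h
    rw [List.map_cons, List.nodup_cons] at h
    push_neg at h
    by_cases hx : f x ∈ xs.map f
    · obtain ⟨b, hb, hfb⟩ := List.mem_map.mp hx
      obtain ⟨s, t, hst⟩ := List.append_of_mem hb
      exact ⟨[], s, t, x, b, by simp [hst], hfb.symm⟩
    · obtain ⟨s, m, t, a, b, hl, hab⟩ := ih (h hx)
      exact ⟨x :: s, m, t, a, b, by simp [hl], hab⟩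

lemma two_mem_split {α : Type*} {a b : α} {l : List α} (ha : a ∈ l) (hb : b ∈ l)
    (hne : a ≠ b) :
    (∃ s m t, l = s ++ a :: (m ++ b :: t)) ∨ (∃ s m t, l = s ++ b :: (m ++ a :: t)) := by
  obtain ⟨s, t, hst⟩ := List.append_of_mem ha
  subst hst
  rcases List.mem_append.mp hb with hb | hb
  · obtain ⟨s1, t1, h1⟩ := List.append_of_mem hb
    right; exact ⟨s1, t1, t, by simp [h1]⟩
  · rcases List.mem_cons.mp hb with hb | hb
    · exact absurd hb.symm hne
    · obtain ⟨s1, t1, h1⟩ := List.append_of_mem hb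
      left; exact ⟨s, s1, t1, by simp [h1]⟩

lemma IsClosedWalk.exists_walkFrom {w : List (Dart E)} (h : G.IsClosedWalk w) :
    ∃ u, G.IsWalkFrom w u u := by
  rcases w with _ | ⟨d, t⟩
  · exact absurd rfl h.1
  · exact ⟨G.dsrc d, (isClosedWalk_iff h.1 (by simp)).mp h⟩

/-- Splitting a closed walk at a repeated vertex. -/
lemma closed_split_dup {w₁ w₂ w₃ : List (Dart E)} {d d' : Dart E}
    (h : G.IsClosedWalk (w₁ ++ d :: (w₂ ++ d' :: w₃)))
    (hdd : G.dsrc d = G.dsrc d') :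
    G.IsClosedWalk (d :: w₂) ∧ G.IsClosedWalk (w₁ ++ d' :: w₃) := by
  obtain ⟨u, hw⟩ := h.exists_walkFrom
  obtain ⟨m₁, hA, hB⟩ := hw.append_iff
  obtain ⟨hd, hC⟩ := hB.tail'
  obtain ⟨m₂, hD, hE⟩ := hC.append_iff
  obtain ⟨hd', hF⟩ := hE.tail'
  have hm : m₂ = m₁ := by rw [← hd, ← hd', hdd]
  constructor
  · exact (IsWalkFrom.cons hd (hm ▸ hD)).isClosedWalk (by simp)
  · exact (hA.append (IsWalkFrom.cons (hm ▸ hd') hF)).isClosedWalk (by simp)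

/-- Splitting a closed walk at a pair of opposite darts. -/
lemma closed_split_opp {w₁ w₂ w₃ : List (Dart E)} {d d' : Dart E}
    (h : G.IsClosedWalk (w₁ ++ d :: (w₂ ++ d' :: w₃)))
    (h1 : G.dtgt d = G.dsrc d') (h2 : G.dtgt d' = G.dsrc d) :
    G.IsClosedWalk (d :: (w₂ ++ [d'])) ∧
      (w₁ ++ w₃ = [] ∨ G.IsClosedWalk (w₁ ++ w₃)) := by
  obtain ⟨u, hw⟩ := h.exists_walkFrom
  obtain ⟨m₁, hA, hB⟩ := hw.append_iff
  obtain ⟨hd, hC⟩ := hB.tail'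
  obtain ⟨m₂, hD, hE⟩ := hC.append_iff
  obtain ⟨hd', hF⟩ := hE.tail'
  constructor
  · have hd'w : G.IsWalkFrom [d'] m₂ (G.dtgt d') :=
      IsWalkFrom.cons hd' (isWalkFrom_nil _)
    have h3 : G.IsWalkFrom (d :: (w₂ ++ [d'])) m₁ (G.dtgt d') :=
      IsWalkFrom.cons hd (hD.append hd'w)
    rw [h2, hd] at h3
    exact h3.isClosedWalk (by simp)
  · by_cases hnil : w₁ ++ w₃ = []
    · exact Or.inl hnil
    · right
      have hF' : G.IsWalkFrom w₃ m₁ u := by rwa [h2, hd] at hF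
      exact (hA.append hF').isClosedWalk hnil

/-- The interior of a closed walk flanked by opposite darts. -/
lemma closed_inner {w₂ : List (Dart E)} {d d' : Dart E}
    (h : G.IsClosedWalk (d :: (w₂ ++ [d'])))
    (h1 : G.dtgt d = G.dsrc d') :
    w₂ = [] ∨ G.IsClosedWalk w₂ := by
  obtain ⟨u, hw⟩ := h.exists_walkFrom
  obtain ⟨hd, hC⟩ := hw.tail'
  obtain ⟨m, hD, hE⟩ := hC.append_iff
  obtain ⟨hd', -⟩ := hE.tail'
  by_cases hnil : w₂ = []
  · exact Or.inl hnil
  · right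
    have hm : m = G.dtgt d := by rw [← hd', h1]
    exact (hm ▸ hD).isClosedWalk hnil

end Multigraph
namespace Multigraph
variable {V E : Type} {G : Multigraph V E}

lemma nodup_ne_of_split {α β : Type*} {f : α → β} {l s m t : List α} {a b : α}
    (hsp : l = s ++ a :: (m ++ b :: t)) (h : (l.map f).Nodup) : f a ≠ f b := by
  have hsub : List.Sublist [a, b] l := by
    rw [hsp, show s ++ a :: (m ++ b :: t) = (s ++ a :: m) ++ b :: t by simp]
    have h1 : List.Sublist [a] (s ++ a :: m) := (List.singleton_sublist).mpr (by simp)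
    have h2 : List.Sublist [b] (b :: t) := (List.singleton_sublist).mpr (by simp)
    simpa using h1.append h2
  simpa using h.sublist (hsub.map f)

lemma ifDart_add_flip (S : Set E) (e : E) (b : Bool) :
    ((if (e, b).1 ∈ S then dartChain (e, b) else 0) +
      (if (e, !b).1 ∈ S then dartChain (e, !b) else 0)) = (0 : E → ℤ) := by
  by_cases h : e ∈ S
  · simp only [h, if_pos]
    exact dartChain_add_flip e b
  · simp [h]

lemma boundary_chainRes [Fintype E] {S : Set E}
    (hS : ∀ (w : List (Dart E)), G.IsCycle w →
      (∃ e ∈ Multigraph.edges w, e ∈ S) → ∀ e ∈ Multigraph.edges w, e ∈ S) :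
    ∀ (n : ℕ) (w : List (Dart E)), w.length ≤ n → G.IsClosedWalk w →
      G.boundary (chainRes S w) = 0 := by
  intro n
  induction n with
  | zero =>
    intro w hl hw
    rw [List.length_eq_zero_iff.mp (Nat.le_zero.mp hl)] at hw
    exact absurd rfl hw.1
  | succ n ih =>
    intro w hl hw
    by_cases h1 : (w.map G.dsrc).Nodup
    · by_cases h2 : ∃ e, (e, true) ∈ w ∧ (e, false) ∈ w
      · -- opposite darts appear: split them off
        obtain ⟨e, hmt, hmf⟩ := h2
        have key : ∀ (b : Bool) (s m t : List (Dart E)),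
            w = s ++ (e, b) :: (m ++ (e, !b) :: t) →
            G.boundary (chainRes S w) = 0 := by
          intro b s m t hsp
          subst hsp
          have hlen := hl
          simp only [List.length_append, List.length_cons] at hlen
          have h1' : G.dtgt (e, b) = G.dsrc (e, !b) := dtgt_dsrc_not (G := G) e b
          have h2' : G.dtgt (e, !b) = G.dsrc (e, b) := by
            have h3 := dtgt_dsrc_not (G := G) e (!b); rwa [Bool.not_not] at h3
          obtain ⟨hA, hB⟩ := closed_split_opp hw h1' h2'
          rcases hB with hnil | hB
          · obtain ⟨hs, ht⟩ := List.append_eq_nil_iff.mp hnil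
            subst hs; subst ht
            have hres : chainRes S ([] ++ (e, b) :: (m ++ (e, !b) :: [])) =
                chainRes S m :=
              calc chainRes S ([] ++ (e, b) :: (m ++ (e, !b) :: [])) =
                  ((if (e, b).1 ∈ S then dartChain (e, b) else 0) +
                    (if (e, !b).1 ∈ S then dartChain (e, !b) else 0)) + chainRes S m := by
                    simp only [chainRes_append, chainRes_cons, chainRes_nil]; abel
                _ = chainRes S m := by rw [ifDart_add_flip]; simp
            rw [hres]
            rcases closed_inner hA h1' with hm | hm
            · rw [hm, chainRes_nil, boundary_zero]
            · exact ih m (by omega) hm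
          · have hres : chainRes S (s ++ (e, b) :: (m ++ (e, !b) :: t)) =
                chainRes S ((e, b) :: (m ++ [(e, !b)])) + chainRes S (s ++ t) := by
              simp only [chainRes_append, chainRes_cons, chainRes_nil]
              abel
            have hpos : 0 < (s ++ t).length := List.length_pos_iff.mpr hB.1
            simp only [List.length_append] at hpos
            rw [hres, boundary_add,
              ih _ (by simp; omega) hA,
              ih _ (by simp; omega) hB, add_zero]
        rcases two_mem_split hmt hmf (by simp) with ⟨s, m, t, hsp⟩ | ⟨s, m, t, hsp⟩
        · exact key true s m t (by simpa using hsp)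
        · exact key false s m t (by simpa using hsp)
      · -- no opposite darts and no repeated source: `w` is a cycle
        have hedges : (w.map Prod.fst).Nodup := by
          by_contra h3
          obtain ⟨s, m, t, a, b, hsp, hab⟩ := exists_dup_split Prod.fst w h3
          rcases a with ⟨ea, ba⟩
          rcases b with ⟨eb, bb⟩
          simp only at hab
          subst hab
          by_cases hb : ba = bb
          · subst hb
            exact nodup_ne_of_split hsp h1 rfl
          · apply h2
            refine ⟨ea, ?_, ?_⟩ <;> cases ba <;> cases bb <;>
              simp_all <;> rw [hsp] <;> simp
        have hcyc : G.IsCycle w := ⟨hw, hedges, h1⟩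
        by_cases h4 : ∃ e ∈ Multigraph.edges w, e ∈ S
        · rw [chainRes_eq_chain (fun d hd => hS w hcyc h4 d.1 ⟨d.2, by simpa using hd⟩)]
          exact hw.boundary_chain
        · rw [chainRes_eq_zero (fun d hd hdS => h4 ⟨d.1, ⟨d.2, by simpa using hd⟩, hdS⟩),
            boundary_zero]
    · -- repeated source vertex: split there
      obtain ⟨s, m, t, a, b, hsp, hab⟩ := exists_dup_split G.dsrc w h1
      subst hsp
      have hlen := hl
      simp only [List.length_append, List.length_cons] at hlen
      obtain ⟨hA, hB⟩ := closed_split_dup hw hab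
      have hres : chainRes S (s ++ a :: (m ++ b :: t)) =
          chainRes S (a :: m) + chainRes S (s ++ b :: t) := by
        simp only [chainRes_append, chainRes_cons]
        abel
      rw [hres, boundary_add,
        ih _ (by simp; omega) hA,
        ih _ (by simp; omega) hB, add_zero]

end Multigraph
namespace Multigraph
variable {V E : Type} {G : Multigraph V E}

lemma dsrc_mem_vertsOf {w : List (Dart E)} {d : Dart E} (hd : d ∈ w) :
    G.dsrc d ∈ G.vertsOf w := ⟨d, hd, rfl⟩

lemma dtgt_mem_vertsOf {w : List (Dart E)} {d : Dart E} (hw : G.IsClosedWalk w)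
    (hd : d ∈ w) : G.dtgt d ∈ G.vertsOf w := by
  obtain ⟨s, t, hst⟩ := List.append_of_mem hd
  subst hst
  rcases t with _ | ⟨d₂, t₂⟩
  · rcases hhd : (s ++ [d]).head? with _ | dh
    · rcases s with _ | ⟨a, s⟩ <;> simp at hhd
    · have hdh : dh ∈ s ++ [d] := List.mem_of_mem_head? (by rw [hhd]; rfl)
      have h := hw.2.2 d (by simp) dh (by rw [hhd]; rfl)
      rw [h]; exact dsrc_mem_vertsOf hdh
  · have hc := hw.2.1
    obtain ⟨-, hc2, -⟩ := List.isChain_append.mp hc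
    have h : G.dtgt d = G.dsrc d₂ := (List.isChain_cons_cons.mp hc2).1
    rw [h]; exact dsrc_mem_vertsOf (by simp)

lemma endpoints_mem_vertsOf {w : List (Dart E)} {e : E} {b : Bool}
    (hw : G.IsClosedWalk w) (hd : (e, b) ∈ w) :
    G.src e ∈ G.vertsOf w ∧ G.tgt e ∈ G.vertsOf w := by
  have h1 := dsrc_mem_vertsOf (G := G) hd
  have h2 := dtgt_mem_vertsOf hw hd
  cases b <;> simp [dsrc, dtgt] at h1 h2 <;> exact ⟨by assumption, by assumption⟩

/-- Any two vertices on a closed walk are joined by a walk inside it. -/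
lemma walk_within {w : List (Dart E)} (hw : G.IsClosedWalk w) {u u' : V}
    (hu : u ∈ G.vertsOf w) (hu' : u' ∈ G.vertsOf w) :
    ∃ p, G.IsWalkFrom p u u' ∧ ∀ d ∈ p, d ∈ w := by
  obtain ⟨d₀, hd₀, hsrc₀⟩ := hu
  obtain ⟨s, t, hst⟩ := List.append_of_mem hd₀
  subst hst
  obtain ⟨x, hwf⟩ := hw.exists_walkFrom
  obtain ⟨m, hs, hrest⟩ := hwf.append_iff
  obtain ⟨hd, ht⟩ := hrest.tail'
  have hu_m : m = u := by rw [← hd, hsrc₀]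
  have hrot : G.IsWalkFrom (d₀ :: (t ++ s)) m m := IsWalkFrom.cons hd (ht.append hs)
  rw [hu_m] at hrot
  obtain ⟨d₁, hd₁, hsrc₁⟩ := hu'
  have hd₁' : d₁ ∈ d₀ :: (t ++ s) := by
    simp only [List.mem_append, List.mem_cons] at hd₁ ⊢
    tauto
  obtain ⟨s', t', hst'⟩ := List.append_of_mem hd₁'
  rw [hst'] at hrot
  obtain ⟨m', hs', hrest'⟩ := hrot.append_iff
  obtain ⟨hd₁s, -⟩ := hrest'.tail'
  have hm' : m' = u' := by rw [← hd₁s, hsrc₁]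
  rw [hm'] at hs'
  refine ⟨s', hs', ?_⟩
  intro d hdp
  have hdm : d ∈ d₀ :: (t ++ s) := by rw [hst']; simp [hdp]
  simp only [List.mem_cons, List.mem_append] at hdm ⊢
  tauto

/-- The set of edges belonging to a block. -/
def blockEdges (G : Multigraph V E) (B : Block G) : Set E :=
  {e | ∃ c : {w : List (Dart E) // G.IsCycle w},
    Quot.mk (CycleRel G) c = B ∧ e ∈ Multigraph.edges c.1}

lemma quot_eq_of_edge_mem {w : List (Dart E)} (hw : G.IsCycle w) {B : Block G} {e : E}
    (he : e ∈ Multigraph.edges w) (heB : e ∈ blockEdges G B) :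
    Quot.mk (CycleRel G) ⟨w, hw⟩ = B := by
  obtain ⟨c, hc, hec⟩ := heB
  rw [← hc]
  exact Quot.sound ⟨e, he, hec⟩

lemma blockEdges_disjoint {B B' : Block G} (h : B ≠ B') {e : E}
    (h1 : e ∈ blockEdges G B) (h2 : e ∈ blockEdges G B') : False := by
  obtain ⟨⟨wc, hwc⟩, hc, hec⟩ := h1
  exact h (hc.symm.trans (quot_eq_of_edge_mem hwc hec h2))

lemma cycleRel_refl (c : {w : List (Dart E) // G.IsCycle w}) : CycleRel G c c := by
  obtain ⟨w, hw⟩ := c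
  rcases w with _ | ⟨d, t⟩
  · exact absurd rfl hw.1.1
  · exact ⟨d.1, ⟨d.2, by simp⟩, ⟨d.2, by simp⟩⟩

lemma cycleRel_symm : Symmetric (CycleRel G) := fun _ _ h =>
  ⟨h.choose, h.choose_spec.2, h.choose_spec.1⟩

lemma eqvGen_to_rtg {c c' : {w : List (Dart E) // G.IsCycle w}}
    (h : Relation.EqvGen (CycleRel G) c c') : Relation.ReflTransGen (CycleRel G) c c' := by
  induction h with
  | rel a b h => exact Relation.ReflTransGen.single h
  | refl a => exact Relation.ReflTransGen.refl
  | symm a b h ih => haveI : Std.Symm (CycleRel G) := ⟨fun _ _ h => cycleRel_symm h⟩; exact Std.Symm.symm _ _ ih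
  | trans a b c h1 h2 ih1 ih2 => exact ih1.trans ih2

lemma quot_eq_of_rtg {c c' : {w : List (Dart E) // G.IsCycle w}}
    (h : Relation.ReflTransGen (CycleRel G) c c') :
    Quot.mk (CycleRel G) c = Quot.mk (CycleRel G) c' := by
  induction h with
  | refl => rfl
  | tail h1 h2 ih => exact ih.trans (Quot.sound h2)

lemma rtg_walk {c c' : {w : List (Dart E) // G.IsCycle w}}
    (h : Relation.ReflTransGen (CycleRel G) c c') :
    ∀ u ∈ G.vertsOf c.1, ∀ u' ∈ G.vertsOf c'.1,
      ∃ p, G.IsWalkFrom p u u' ∧ ∀ d ∈ p, d.1 ∈ blockEdges G (Quot.mk (CycleRel G) c) := by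
  induction h with
  | refl =>
    intro u hu u' hu'
    obtain ⟨p, hp, hmem⟩ := walk_within c.2.1 hu hu'
    exact ⟨p, hp, fun d hd => ⟨c, rfl, ⟨d.2, hmem d hd⟩⟩⟩
  | @tail b cc h1 hrel ih =>
    intro u hu u' hu'
    obtain ⟨e, heb, hec⟩ := hrel
    obtain ⟨bb, hbb⟩ := heb
    obtain ⟨bc, hbc⟩ := hec
    have hsrc_b : G.src e ∈ G.vertsOf b.1 := (endpoints_mem_vertsOf b.2.1 hbb).1
    have hsrc_c : G.src e ∈ G.vertsOf cc.1 := (endpoints_mem_vertsOf cc.2.1 hbc).1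
    obtain ⟨p₁, hp₁, hm₁⟩ := ih u hu (G.src e) hsrc_b
    obtain ⟨p₂, hp₂, hm₂⟩ := walk_within cc.2.1 hsrc_c hu'
    refine ⟨p₁ ++ p₂, hp₁.append hp₂, ?_⟩
    intro d hd
    rcases List.mem_append.mp hd with hd | hd
    · exact hm₁ d hd
    · refine ⟨cc, ?_, ⟨d.2, hm₂ d hd⟩⟩
      exact (quot_eq_of_rtg (h1.tail ⟨e, ⟨bb, hbb⟩, ⟨bc, hbc⟩⟩)).symm

/-- Any two vertices of a block are joined by a walk using only edges of the block. -/
lemma exists_walk_in_block {B : Block G} {v v' : V}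
    (hv : v ∈ vertsOfBlock G B) (hv' : v' ∈ vertsOfBlock G B) :
    ∃ p, G.IsWalkFrom p v v' ∧ ∀ d ∈ p, d.1 ∈ blockEdges G B := by
  obtain ⟨c, hc, hvc⟩ := hv
  obtain ⟨c', hc', hvc'⟩ := hv'
  have heq : Relation.EqvGen (CycleRel G) c c' := Quot.eq.mp (hc.trans hc'.symm)
  obtain ⟨p, hp, hm⟩ := rtg_walk (eqvGen_to_rtg heq) v hvc v' hvc'
  exact ⟨p, hp, fun d hd => hc ▸ hm d hd⟩

end Multigraph
section Final
open Multigraph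

variable {V E : Type}

lemma bcg_adj {G : Multigraph V E} {x y : Block G ⊕ {v : V // IsCutVertex G v}}
    (h : (blockCutGraph G).Adj x y) :
    (∃ B v, x = Sum.inl B ∧ y = Sum.inr v ∧ v.1 ∈ vertsOfBlock G B) ∨
    (∃ B v, x = Sum.inr v ∧ y = Sum.inl B ∧ v.1 ∈ vertsOfBlock G B) := by
  rw [blockCutGraph, SimpleGraph.fromRel_adj] at h
  rcases h.2 with ⟨B, v, h1, h2, h3⟩ | ⟨B, v, h1, h2, h3⟩
  · exact Or.inl ⟨B, v, h1, h2, h3⟩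
  · exact Or.inr ⟨B, v, h2, h1, h3⟩

lemma blockEdges_saturated {G : Multigraph V E} (Bs : Block G) :
    ∀ (w : List (Dart E)), G.IsCycle w →
      (∃ e ∈ Multigraph.edges w, e ∈ blockEdges G Bs) →
      ∀ e ∈ Multigraph.edges w, e ∈ blockEdges G Bs := by
  rintro w hw ⟨e0, he0, he0B⟩ e he
  exact ⟨⟨w, hw⟩, quot_eq_of_edge_mem hw he0 he0B, he⟩

lemma mid_walk {G : Multigraph V E} (Bs : Block G) :
    ∀ (n : ℕ) (x y : Block G ⊕ {v : V // IsCutVertex G v})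
      (p : (blockCutGraph G).Walk x y), p.length ≤ n →
      Sum.inl Bs ∉ p.support →
      ∀ (a b : {v : V // IsCutVertex G v}), x = Sum.inr a → y = Sum.inr b →
      ∃ W, G.IsWalkFrom W a.1 b.1 ∧ ∀ d ∈ W, d.1 ∉ blockEdges G Bs := by
  intro n
  induction n with
  | zero =>
    intro x y p hl hs a b hx hy
    cases p with
    | nil =>
      exact ⟨[], by rw [Sum.inr.inj (hx.symm.trans hy)]; exact isWalkFrom_nil _, by simp⟩
    | cons h q => simp [SimpleGraph.Walk.length_cons] at hl
  | succ n ih =>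
    intro x y p hl hs a b hx hy
    cases p with
    | nil =>
      exact ⟨[], by rw [Sum.inr.inj (hx.symm.trans hy)]; exact isWalkFrom_nil _, by simp⟩
    | cons h q =>
      subst hx
      rcases bcg_adj h with ⟨B, v', h1, h2, h3⟩ | ⟨B, v', h1, h2, h3⟩
      · exact absurd h1 (by simp)
      · have hav : v' = a := (Sum.inr.inj h1).symm
        subst hav
        subst h2
        have hBBs : B ≠ Bs := by
          intro hBB; subst hBB
          exact hs (by
            rw [SimpleGraph.Walk.support_cons]
            exact List.mem_cons_of_mem _ q.start_mem_support)
        cases q with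
        | nil => exact absurd hy (by simp)
        | cons h₂ q₂ =>
          rcases bcg_adj h₂ with ⟨B', v₂, g1, g2, g3⟩ | ⟨B', v₂, g1, g2, g3⟩
          · have hBB' : B' = B := (Sum.inl.inj g1).symm
            subst hBB'
            subst g2
            have hlen : q₂.length ≤ n := by
              simp [SimpleGraph.Walk.length_cons] at hl; omega
            have hsup : Sum.inl Bs ∉ q₂.support := by
              intro hmem
              exact hs (by simp [SimpleGraph.Walk.support_cons, hmem])
            obtain ⟨W₂, hW₂, hW₂m⟩ := ih _ _ q₂ hlen hsup v₂ b rfl hy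
            obtain ⟨W₁, hW₁, hW₁m⟩ := exists_walk_in_block (G := G) h3 g3
            refine ⟨W₁ ++ W₂, hW₁.append hW₂, ?_⟩
            intro d hd hdS
            rcases List.mem_append.mp hd with hd | hd
            · exact blockEdges_disjoint hBBs (hW₁m d hd) hdS
            · exact hW₂m d hd hdS
          · exact absurd g1 (by simp)

lemma no_cycle_at_inl [Fintype V] [Fintype E] {G : Multigraph V E} (Bs : Block G)
    (c : (blockCutGraph G).Walk (Sum.inl Bs) (Sum.inl Bs)) (hc : c.IsCycle) : False := by
  cases c with
  | nil => exact hc.ne_nil rfl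
  | cons h₁ q =>
    rcases bcg_adj h₁ with ⟨B, v₁, h1, h2, h3⟩ | ⟨B, v₁, h1, h2, h3⟩
    · obtain rfl : B = Bs := (Sum.inl.inj h1).symm
      subst h2
      obtain ⟨r, hr⟩ : ∃ r : (blockCutGraph G).Walk (Sum.inl B) (Sum.inr v₁),
          q = r.reverse := ⟨q.reverse, (q.reverse_reverse).symm⟩
      subst hr
      cases r with
      | cons h₂ r₂ =>
        rcases bcg_adj h₂ with ⟨B', vk, g1, g2, g3⟩ | ⟨B', vk, g1, g2, g3⟩
        · obtain rfl : B' = B := (Sum.inl.inj g1).symm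
          subst g2
          have hnds := hc.support_nodup
          simp only [SimpleGraph.Walk.support_cons, List.tail_cons] at hnds
          rw [SimpleGraph.Walk.support_reverse, List.nodup_reverse,
            SimpleGraph.Walk.support_cons, List.nodup_cons] at hnds
          obtain ⟨hBs_not, hnd⟩ := hnds
          have hlen3 := hc.three_le_length
          have hne_v : v₁ ≠ vk := by
            intro hv
            subst hv
            have hpath : r₂.IsPath := SimpleGraph.Walk.IsPath.mk' hnd
            have hnil := (SimpleGraph.Walk.isPath_iff_eq_nil (p := r₂)).mp hpath
            rw [hnil] at hlen3
            simp at hlen3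
          obtain ⟨Wm, hWm, hWmS⟩ := mid_walk B' r₂.length _ _ r₂ le_rfl hBs_not vk v₁ rfl rfl
          obtain ⟨Q, hQ, hQS⟩ := exists_walk_in_block (G := G) h3 g3
          have hne1 : v₁.1 ≠ vk.1 := fun hh => hne_v (Subtype.ext hh)
          have hne_l : Q ++ Wm ≠ [] := by
            intro hnil
            rcases List.append_eq_nil_iff.mp hnil with ⟨hQn, -⟩
            exact hne1 (hQ.2.1 hQn)
          have hclosed : G.IsClosedWalk (Q ++ Wm) := (hQ.append hWm).isClosedWalk hne_l
          have hD := boundary_chainRes (G := G) (blockEdges_saturated B')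
            (Q ++ Wm).length (Q ++ Wm) le_rfl hclosed
          have hres : chainRes (blockEdges G B') (Q ++ Wm) = chain Q := by
            rw [chainRes_append, chainRes_eq_chain hQS, chainRes_eq_zero hWmS, add_zero]
          rw [hres, boundary_chain_walk hQ] at hD
          have hval := congrFun hD vk.1
          simp [hne1] at hval
        · exact absurd g1 (by simp)
    · exact absurd h1 (by simp)

end Final

/-- for a finite connected graph, the block-cut incidence graph is acyclic. -/
theorem stmt18 {V E : Type} [Fintype V] [Fintype E] (G : Multigraph V E)
    (hconn : G.Conn) :
    (blockCutGraph G).IsAcyclic := by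
  intro x c hc
  cases x with
  | inl B => exact no_cycle_at_inl B c hc
  | inr v =>
    cases c with
    | nil => exact hc.ne_nil rfl
    | cons h q =>
      rcases bcg_adj h with ⟨B, v', h1, h2, h3⟩ | ⟨B, v', h1, h2, h3⟩
      · exact absurd h1 (by simp)
      · subst h2
        have hz : Sum.inl B ∈ (SimpleGraph.Walk.cons h q).support := by
          rw [SimpleGraph.Walk.support_cons]
          exact List.mem_cons_of_mem _ q.start_mem_support
        exact no_cycle_at_inl B _ (hc.rotate hz)
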